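/- For any invertible d×d complex matrix g, the real-linear map H ↦ gᵀHg on the space Sym_d(ℂ) of symmetric d×d complex matrices (viewed as a real vector space) has Jacobian determinant of absolute value |det g|^{2(d+1)}. -/

import Mathlib

open Matrix

/-- The symmetric `d×d` complex matrices, as a real subspace of the space of matrices. -/
noncomputable def symR (d : ℕ) : Submodule ℝ (Matrix (Fin d) (Fin d) ℂ) where
  carrier := {H | Hᵀ = H}
  add_mem' := by
    intro a b ha hb
    simp only [Set.mem_setOf_eq] at *
    simp [transpose_add, ha, hb]
  zero_mem' := by simp
  smul_mem' := by
    intro c a ha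
    simp only [Set.mem_setOf_eq] at *
    simp [transpose_smul, ha]

/-- The real-linear map `H ↦ gᵀ H g` on `d×d` complex matrices. -/
noncomputable def congrMapR {d : ℕ} (g : Matrix (Fin d) (Fin d) ℂ) :
    Matrix (Fin d) (Fin d) ℂ →ₗ[ℝ] Matrix (Fin d) (Fin d) ℂ where
  toFun H := gᵀ * H * g
  map_add' := by
    intro H₁ H₂
    simp [Matrix.mul_add, Matrix.add_mul]
  map_smul' := by
    intro c H
    simp [Matrix.mul_smul, Matrix.smul_mul]

theorem congrMapR_mem {d : ℕ} (g : Matrix (Fin d) (Fin d) ℂ) :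
    ∀ H ∈ symR d, congrMapR g H ∈ symR d := by
  intro H hH
  have hH' : Hᵀ = H := hH
  show (gᵀ * H * g)ᵀ = gᵀ * H * g
  rw [transpose_mul, transpose_mul, transpose_transpose, hH', Matrix.mul_assoc]

/-- The real-linear endomorphism `H ↦ gᵀ H g` of the real vector space `Sym_d(ℂ)`. -/
noncomputable def symCongr {d : ℕ} (g : Matrix (Fin d) (Fin d) ℂ) : symR d →ₗ[ℝ] symR d :=
  (congrMapR g).restrict (congrMapR_mem g)

/-! ### Auxiliary development -/

variable {d : ℕ}

abbrev SymIdx (d : ℕ) := {p : Fin d × Fin d // p.1 ≤ p.2}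

noncomputable def symBase (q : SymIdx d) : Matrix (Fin d) (Fin d) ℂ :=
  if q.1.1 = q.1.2 then Matrix.single q.1.1 q.1.2 1
  else Matrix.single q.1.1 q.1.2 1 + Matrix.single q.1.2 q.1.1 1

theorem symBase_apply (q : SymIdx d) (a b : Fin d) :
    symBase q a b = if (q.1.1 = a ∧ q.1.2 = b) ∨ (q.1.1 = b ∧ q.1.2 = a) then 1 else 0 := by
  obtain ⟨⟨k, l⟩, hkl⟩ := q
  dsimp at hkl ⊢
  unfold symBase
  dsimp
  split_ifs with h h2 h2 <;>
    simp_all only [Matrix.single, of_apply, Matrix.add_apply, Fin.ext_iff, Fin.le_iff_val_le_val] <;>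
    split_ifs <;> simp_all <;> omega

theorem symBase_apply_idx (q p : SymIdx d) :
    symBase q p.1.1 p.1.2 = if q = p then 1 else 0 := by
  rw [symBase_apply]
  obtain ⟨⟨k, l⟩, hkl⟩ := q
  obtain ⟨⟨a, b⟩, hab⟩ := p
  dsimp at *
  split_ifs with h1 h2 h2
  · rfl
  · exfalso; apply h2; apply Subtype.ext; dsimp
    simp only [Fin.le_iff_val_le_val] at hkl hab
    simp only [Prod.mk.injEq, Fin.ext_iff] at *
    omega
  · exfalso; apply h1
    have h3 := congrArg Subtype.val h2
    simp only [Prod.mk.injEq] at h3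
    exact Or.inl h3
  · rfl

theorem symBase_symm (q : SymIdx d) : (symBase q)ᵀ = symBase q := by
  ext a b
  rw [transpose_apply, symBase_apply, symBase_apply]
  have : ((q.1.1 = b ∧ q.1.2 = a) ∨ (q.1.1 = a ∧ q.1.2 = b)) ↔
      ((q.1.1 = a ∧ q.1.2 = b) ∨ (q.1.1 = b ∧ q.1.2 = a)) := or_comm
  simp only [this]

noncomputable def scal : Fin 2 → ℂ := ![1, Complex.I]

noncomputable def wvS (i : Fin 2 × SymIdx d) : symR d :=
  ⟨scal i.1 • symBase i.2, by
    show (scal i.1 • symBase i.2)ᵀ = scal i.1 • symBase i.2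
    rw [transpose_smul, symBase_symm]⟩

noncomputable def reim : Fin 2 → (ℂ →ₗ[ℝ] ℝ) := ![Complex.reLm, Complex.imLm]

noncomputable def symCoord : symR d →ₗ[ℝ] (Fin 2 × SymIdx d → ℝ) where
  toFun H := fun i => reim i.1 ((H : Matrix (Fin d) (Fin d) ℂ) i.2.1.1 i.2.1.2)
  map_add' H K := by funext i; simp
  map_smul' c H := by funext i; simp [← Complex.real_smul]

noncomputable def symOfCoord : (Fin 2 × SymIdx d → ℝ) →ₗ[ℝ] symR d where
  toFun c := ∑ i, c i • wvS i
  map_add' c c' := by simp [add_smul, Finset.sum_add_distrib]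
  map_smul' r c := by simp [mul_smul, Finset.smul_sum]

theorem coord_ofCoord (c : Fin 2 × SymIdx d → ℝ) : symCoord (symOfCoord c) = c := by
  funext i
  obtain ⟨s, p⟩ := i
  have key : ((symOfCoord c : symR d) : Matrix (Fin d) (Fin d) ℂ) p.1.1 p.1.2
      = c (0, p) + c (1, p) • Complex.I := by
    show ((∑ i, c i • wvS i : symR d) : Matrix (Fin d) (Fin d) ℂ) p.1.1 p.1.2 = _
    rw [AddSubmonoidClass.coe_finset_sum]
    rw [Matrix.sum_apply]
    have : ∀ i : Fin 2 × SymIdx d, ((c i • wvS i : symR d) : Matrix (Fin d) (Fin d) ℂ) p.1.1 p.1.2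
        = c i • (scal i.1 * (if i.2 = p then 1 else 0)) := by
      intro i
      simp [wvS, symBase_apply_idx, Matrix.smul_apply]
    simp only [this]
    rw [Fintype.sum_prod_type_right]
    rw [Finset.sum_eq_single p]
    · simp [Fin.sum_univ_two, scal]
    · intro q _ hq
      simp [hq]
    · simp
  show reim s (((symOfCoord c : symR d) : Matrix (Fin d) (Fin d) ℂ) p.1.1 p.1.2) = c (s, p)
  rw [key]
  fin_cases s <;> simp [reim, Complex.real_smul]

theorem ofCoord_coord (H : symR d) : symOfCoord (symCoord H) = H := by
  apply Subtype.ext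
  show ((∑ i, symCoord H i • wvS i : symR d) : Matrix (Fin d) (Fin d) ℂ) = (H : Matrix (Fin d) (Fin d) ℂ)
  rw [AddSubmonoidClass.coe_finset_sum]
  ext a b
  rw [Matrix.sum_apply]
  have hsym : ((H : Matrix (Fin d) (Fin d) ℂ))ᵀ = H := H.2
  have term : ∀ i : Fin 2 × SymIdx d, ((symCoord H i • wvS i : symR d) : Matrix (Fin d) (Fin d) ℂ) a b
      = (reim i.1 ((H : Matrix (Fin d) (Fin d) ℂ) i.2.1.1 i.2.1.2)) •
        (scal i.1 * (if (i.2.1.1 = a ∧ i.2.1.2 = b) ∨ (i.2.1.1 = b ∧ i.2.1.2 = a) then 1 else 0)) := by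
    intro i
    simp [wvS, symCoord, symBase_apply, Matrix.smul_apply]
  simp only [term]
  rw [Fintype.sum_prod_type_right]
  rcases le_total a b with hab | hab
  · rw [Fintype.sum_eq_single (⟨(a, b), hab⟩ : SymIdx d) ?h1]
    · simp [Fin.sum_univ_two, scal, reim, Complex.real_smul, Complex.re_add_im]
    case h1 =>
      intro q hq
      have : ¬((q.1.1 = a ∧ q.1.2 = b) ∨ (q.1.1 = b ∧ q.1.2 = a)) := by
        obtain ⟨⟨k, l⟩, hkl⟩ := q
        dsimp at *
        intro hc
        apply hq
        apply Subtype.ext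
        simp only [Fin.le_iff_val_le_val] at hkl hab
        simp only [Prod.mk.injEq, Fin.ext_iff] at *
        omega
      simp [this]
  · rw [Fintype.sum_eq_single (⟨(b, a), hab⟩ : SymIdx d) ?h2]
    · have hba : (H : Matrix (Fin d) (Fin d) ℂ) b a = (H : Matrix (Fin d) (Fin d) ℂ) a b := by
        conv_lhs => rw [← hsym, transpose_apply]
      simp [Fin.sum_univ_two, scal, reim, hba, Complex.real_smul, Complex.re_add_im]
    case h2 =>
      intro q hq
      have : ¬((q.1.1 = a ∧ q.1.2 = b) ∨ (q.1.1 = b ∧ q.1.2 = a)) := by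
        obtain ⟨⟨k, l⟩, hkl⟩ := q
        dsimp at *
        intro hc
        apply hq
        apply Subtype.ext
        simp only [Fin.le_iff_val_le_val] at hkl hab
        simp only [Prod.mk.injEq, Fin.ext_iff] at *
        omega
      simp [this]

noncomputable def symEquiv : symR d ≃ₗ[ℝ] (Fin 2 × SymIdx d → ℝ) :=
  LinearEquiv.ofLinear symCoord symOfCoord
    (LinearMap.ext fun c => coord_ofCoord c)
    (LinearMap.ext fun H => ofCoord_coord H)

noncomputable def symBasis : Module.Basis (Fin 2 × SymIdx d) ℝ (symR d) := Module.Basis.ofEquivFun symEquiv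

theorem symBasis_apply (i : Fin 2 × SymIdx d) : (symBasis : Module.Basis _ ℝ (symR d)) i = wvS i := by
  rw [symBasis, Module.Basis.coe_ofEquivFun]
  show symEquiv.symm (Pi.single i 1) = wvS i
  rw [symEquiv, LinearEquiv.ofLinear_symm_apply]
  simp only [symOfCoord, LinearMap.coe_mk, AddHom.coe_mk]
  rw [Fintype.sum_eq_single i]
  · simp
  · intro j hj
    simp [Pi.single_apply, hj]

/-! ### The diagonal case -/

theorem diag_conj_symBase (u : Fin d → ℂ) (q : SymIdx d) :
    (diagonal u)ᵀ * symBase q * diagonal u = (u q.1.1 * u q.1.2) • symBase q := by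
  rw [diagonal_transpose]
  ext a b
  rw [Matrix.smul_apply, Matrix.mul_diagonal, Matrix.diagonal_mul, symBase_apply]
  split_ifs with h
  · rw [smul_eq_mul]
    rcases h with ⟨h1, h2⟩ | ⟨h1, h2⟩ <;> subst h1 <;> subst h2 <;> ring
  · simp

noncomputable def rotBlock (μ : ℂ) : Matrix (Fin 2) (Fin 2) ℝ := !![μ.re, -μ.im; μ.im, μ.re]

theorem toMatrix_symCongr_diagonal (u : Fin d → ℂ) :
    LinearMap.toMatrix symBasis symBasis (symCongr (diagonal u)) =
      blockDiagonal (fun q : SymIdx d => rotBlock (u q.1.1 * u q.1.2)) := by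
  ext ⟨t, p⟩ ⟨s, q⟩
  rw [LinearMap.toMatrix_apply, symBasis_apply]
  have hval : ((symCongr (diagonal u) (wvS (s, q)) : symR d) : Matrix (Fin d) (Fin d) ℂ)
      = scal s • ((u q.1.1 * u q.1.2) • symBase q) := by
    show (diagonal u)ᵀ * (scal s • symBase q) * diagonal u = _
    rw [Matrix.mul_smul, Matrix.smul_mul, diag_conj_symBase]
  have hrepr : ∀ y : symR d, (symBasis.repr y) (t, p) = symCoord y (t, p) := by
    intro y
    rw [symBasis, Module.Basis.ofEquivFun_repr_apply]
    rfl
  rw [hrepr]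
  simp only [symCoord, LinearMap.coe_mk, AddHom.coe_mk]
  rw [hval]
  rw [Matrix.smul_apply, Matrix.smul_apply, symBase_apply_idx, Matrix.blockDiagonal_apply]
  rcases eq_or_ne q p with rfl | hqp
  · simp only [if_pos rfl]
    fin_cases s <;> fin_cases t <;>
      simp [scal, reim, rotBlock, Complex.mul_re, Complex.mul_im]
  · rw [if_neg hqp, if_neg (by exact fun h => hqp h.symm)]
    simp

theorem det_symCongr_diagonal (u : Fin d → ℂ) :
    LinearMap.det (symCongr (diagonal u)) = ∏ q : SymIdx d, Complex.normSq (u q.1.1 * u q.1.2) := by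
  rw [← LinearMap.det_toMatrix symBasis, toMatrix_symCongr_diagonal, Matrix.det_blockDiagonal]
  congr 1
  funext q
  rw [Matrix.det_fin_two]
  simp [rotBlock, Complex.normSq_apply]
  ring

theorem prod_symIdx {M : Type*} [CommMonoid M] (f : Fin d → M) :
    (∏ q : SymIdx d, f q.1.1 * f q.1.2) = ∏ a, f a ^ (d + 1) := by
  rw [Finset.prod_mul_distrib]
  have h1 : (∏ q : SymIdx d, f q.1.1) = ∏ a, f a ^ (d - (a : ℕ)) := by
    rw [← Finset.prod_subtype (Finset.univ.filter fun p : Fin d × Fin d => p.1 ≤ p.2)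
      (by simp) (fun p => f p.1)]
    rw [Finset.prod_filter, ← Finset.univ_product_univ, Finset.prod_product]
    refine Finset.prod_congr rfl fun a _ => ?_
    rw [← Finset.prod_filter]
    dsimp only
    rw [Finset.prod_const, Finset.filter_le_eq_Ici, Fin.card_Ici]
  have h2 : (∏ q : SymIdx d, f q.1.2) = ∏ a, f a ^ ((a : ℕ) + 1) := by
    rw [← Finset.prod_subtype (Finset.univ.filter fun p : Fin d × Fin d => p.1 ≤ p.2)
      (by simp) (fun p => f p.2)]
    rw [Finset.prod_filter, ← Finset.univ_product_univ, Finset.prod_product_right]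
    refine Finset.prod_congr rfl fun b _ => ?_
    rw [← Finset.prod_filter]
    dsimp only
    rw [Finset.prod_const, Finset.filter_ge_eq_Iic, Fin.card_Iic]
  rw [h1, h2, ← Finset.prod_mul_distrib]
  refine Finset.prod_congr rfl fun a _ => ?_
  rw [← pow_add]
  congr 1
  have := a.2
  omega

/-! ### Multiplicativity -/

theorem symCongr_one : symCongr (1 : Matrix (Fin d) (Fin d) ℂ) = LinearMap.id := by
  apply LinearMap.ext
  intro H
  apply Subtype.ext
  show (1 : Matrix (Fin d) (Fin d) ℂ)ᵀ * H * 1 = H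
  simp

theorem symCongr_mul (A B : Matrix (Fin d) (Fin d) ℂ) :
    symCongr (A * B) = (symCongr B).comp (symCongr A) := by
  apply LinearMap.ext
  intro H
  apply Subtype.ext
  show (A * B)ᵀ * H * (A * B) = Bᵀ * (Aᵀ * (H : Matrix (Fin d) (Fin d) ℂ) * A) * B
  rw [transpose_mul]
  noncomm_ring

theorem det_symCongr_mul (A B : Matrix (Fin d) (Fin d) ℂ) :
    LinearMap.det (symCongr (A * B)) =
      LinearMap.det (symCongr A) * LinearMap.det (symCongr B) := by
  rw [symCongr_mul, LinearMap.det_comp]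
  ring

/-! ### The transvection case -/

theorem diag_two_mul_transvection (i j : Fin d) (hij : i ≠ j) (c : ℂ) :
    diagonal (fun a => if a = i then 2 else 1) * transvection i j c *
      diagonal (fun a => if a = i then 2⁻¹ else 1) = transvection i j (2 * c) := by
  ext a b
  rw [Matrix.mul_diagonal, Matrix.diagonal_mul]
  simp only [transvection, Matrix.add_apply, Matrix.one_apply, Matrix.single, of_apply]
  by_cases hj : i = a ∧ j = b
  · rcases hj with ⟨rfl, rfl⟩
    rw [if_pos (⟨rfl, rfl⟩ : i = i ∧ j = j), if_pos (⟨rfl, rfl⟩ : i = i ∧ j = j)]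
    simp only [if_pos rfl, if_neg hij, if_neg (Ne.symm hij), if_true]
    ring
  · rw [if_neg hj]
    by_cases hab : a = b
    · subst hab
      split_ifs <;> norm_num
    · rw [if_neg hab, if_neg hj]
      ring

theorem det_symCongr_transvection (i j : Fin d) (hij : i ≠ j) (c : ℂ) :
    LinearMap.det (symCongr (transvection i j c)) = 1 := by
  set δ : ℂ → ℝ := fun e => LinearMap.det (symCongr (transvection i j e)) with hδ
  have hne : δ c ≠ 0 := by
    have h1 : δ c * δ (-c) = 1 := by
      rw [hδ]
      dsimp only
      rw [← det_symCongr_mul, transvection_mul_transvection_same _ _ hij, add_neg_cancel,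
        transvection_zero, symCongr_one, LinearMap.det_id]
    intro h0
    rw [h0, zero_mul] at h1
    exact zero_ne_one h1
  have hsq : δ (2 * c) = δ c * δ c := by
    rw [hδ]
    dsimp only
    rw [← det_symCongr_mul, transvection_mul_transvection_same _ _ hij, two_mul]
  have hconj : δ (2 * c) = δ c := by
    rw [hδ]
    dsimp only
    rw [← diag_two_mul_transvection i j hij c]
    rw [det_symCongr_mul, det_symCongr_mul]
    have hd : LinearMap.det (symCongr (diagonal (fun a : Fin d => if a = i then (2:ℂ) else 1))) *
        LinearMap.det (symCongr (diagonal (fun a : Fin d => if a = i then (2:ℂ)⁻¹ else 1))) = 1 := by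
      rw [← det_symCongr_mul, diagonal_mul_diagonal]
      have : (fun a : Fin d => (if a = i then (2:ℂ) else 1) * (if a = i then 2⁻¹ else 1))
          = fun _ => (1:ℂ) := by
        funext a
        split_ifs <;> norm_num
      rw [this, diagonal_one, symCongr_one, LinearMap.det_id]
    calc LinearMap.det (symCongr (diagonal fun a => if a = i then (2:ℂ) else 1)) *
          LinearMap.det (symCongr (transvection i j c)) *
          LinearMap.det (symCongr (diagonal fun a => if a = i then (2:ℂ)⁻¹ else 1))
        = LinearMap.det (symCongr (transvection i j c)) *
          (LinearMap.det (symCongr (diagonal fun a : Fin d => if a = i then (2:ℂ) else 1)) *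
           LinearMap.det (symCongr (diagonal fun a : Fin d => if a = i then (2:ℂ)⁻¹ else 1))) := by ring
      _ = LinearMap.det (symCongr (transvection i j c)) := by rw [hd, mul_one]
  have h3 : δ c * δ c = δ c * 1 := by rw [← hsq, hconj, mul_one]
  exact mul_left_cancel₀ hne h3

/-! ### Main theorem -/

theorem det_symCongr (d : ℕ) (g : Matrix (Fin d) (Fin d) ℂ) :
    LinearMap.det (symCongr g) = Complex.normSq g.det ^ (d + 1) := by
  apply Matrix.diagonal_transvection_induction
    (P := fun M => LinearMap.det (symCongr M) = Complex.normSq M.det ^ (d + 1))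
  · intro u _
    rw [det_symCongr_diagonal]
    have : ∀ q : SymIdx d, Complex.normSq (u q.1.1 * u q.1.2)
        = Complex.normSq (u q.1.1) * Complex.normSq (u q.1.2) := fun q => map_mul _ _ _
    rw [Finset.prod_congr rfl fun q _ => this q]
    rw [prod_symIdx (fun a => Complex.normSq (u a))]
    rw [det_diagonal, map_prod, ← Finset.prod_pow]
  · intro t
    rw [t.det]
    have : t.toMatrix = transvection t.i t.j t.c := rfl
    rw [this, det_symCongr_transvection t.i t.j t.hij t.c]
    simp
  · intro A B hA hB
    rw [det_symCongr_mul, hA, hB, det_mul, Complex.normSq_mul, mul_pow]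

/-- For an invertible `g ∈ GL(d,ℂ)`, the real-linear map `H ↦ gᵀHg` on `Sym_d(ℂ)`
(viewed as a real vector space) has Jacobian determinant of absolute value
`|det g|^(2(d+1))`. -/
theorem abs_det_symCongr (d : ℕ) (g : Matrix (Fin d) (Fin d) ℂ) (hg : IsUnit g) :
    |LinearMap.det (symCongr g)| = ‖g.det‖ ^ (2 * (d + 1)) := by
  rw [det_symCongr]
  rw [abs_of_nonneg (pow_nonneg (Complex.normSq_nonneg _) _)]
  rw [Complex.normSq_eq_norm_sq, ← pow_mul]
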